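/- arXiv:1204.5666 — 2 statements merged into one kernel-verified Lean document; each statement's English description precedes it below -/
import Mathlib

section
/- Let g : (ZMod 3)^L → ℂ be folded. Then, under the 4NAT test distribution, E[g(y)·conj(g(z))] = 0. -/
open Finset

noncomputable def ω : ℂ := Complex.exp (2 * (Real.pi : ℂ) * Complex.I / 3)

/-- `f` is folded: it takes values in `{1, ω, ω²}` and shifting the input by
`c·𝟙` multiplies the output by `ω^c`. -/
def FoldedC {ι : Type} [Fintype ι] (f : (ι → ZMod 3) → ℂ) : Prop :=
  (∀ x, f x ∈ ({1, ω, ω ^ 2} : Set ℂ)) ∧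
  ∀ (x : ι → ZMod 3) (c : ZMod 3), f (fun i => x i + c) = ω ^ c.val * f x

/-- The TwoPair predicate: the four inputs take exactly two distinct values,
each occurring exactly twice. -/
def TwoPair (a : Fin 4 → ZMod 3) : Prop :=
  ∃ b c : ZMod 3, b ≠ c ∧
    (univ.filter fun i => a i = b).card = 2 ∧
    (univ.filter fun i => a i = c).card = 2

-- Expectation of a complex-valued function of `(x, y, z, w)` under the 4NAT
-- test distribution with parameters `d`, `K` (coordinates `j ∈ [L]`, `L = dK`,
-- are encoded as pairs `(i, j') ∈ Fin K × Fin d` with block `π(j) = i`):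
-- `x` is uniform on `(ZMod 3)^K` and, independently for each coordinate `j`,
-- `(y_j, z_j, w_j)` is uniform on the 6 triples with
-- `TwoPair (x_{π(j)}, y_j, z_j, w_j)`.
open Classical in
noncomputable def natTestExpC (d K : ℕ)
    (h : (Fin K → ZMod 3) → ((Fin K × Fin d) → ZMod 3) →
         ((Fin K × Fin d) → ZMod 3) → ((Fin K × Fin d) → ZMod 3) → ℂ) : ℂ :=
  (∑ x : Fin K → ZMod 3, ∑ y : (Fin K × Fin d) → ZMod 3,
    ∑ z : (Fin K × Fin d) → ZMod 3, ∑ w : (Fin K × Fin d) → ZMod 3,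
      (if ∀ j : Fin K × Fin d, TwoPair ![x j.1, y j, z j, w j] then 1 else 0)
        * h x y z w)
    / (3 ^ K * 6 ^ (d * K))

instance : DecidablePred TwoPair := fun a => by unfold TwoPair; infer_instance

/-- Validity predicate for a pair `(y,z)` relative to block value `a`:
there is (exactly one) `w` with `TwoPair (a,y,z,w)`. -/
def Pval (a y z : ZMod 3) : Prop := (a = y ∨ a = z) ↔ y ≠ z

instance (a y z : ZMod 3) : Decidable (Pval a y z) := by unfold Pval; infer_instance

lemma card_w (a y z : ZMod 3) :
    (univ.filter fun w => TwoPair ![a, y, z, w]).card = if Pval a y z then 1 else 0 := by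
  revert a y z; decide

lemma Pval_shift (a y z : ZMod 3) : Pval (a - 1) (y + 1) z ↔ Pval a y z := by
  revert a y z; decide


lemma ite_congr_inst {α : Sort*} {p q : Prop} {i1 : Decidable p} {i2 : Decidable q}
    (h : p ↔ q) (a b : α) :
    (@ite α p i1 a b) = (@ite α q i2 a b) := by
  by_cases hp : p
  · rw [if_pos hp, if_pos (h.mp hp)]
  · rw [if_neg hp, if_neg (fun hq => hp (h.mpr hq))]

lemma omega_ne_one : ω ≠ 1 := by
  intro h
  rw [ω, Complex.exp_eq_one_iff] at h
  obtain ⟨n, hn⟩ := h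
  have h2 : (2 * (Real.pi : ℂ) * Complex.I) ≠ 0 := by
    simp [Real.pi_ne_zero, Complex.I_ne_zero]
  have h3 : ((3 * n : ℤ) : ℂ) * (2 * (Real.pi : ℂ) * Complex.I)
      = 1 * (2 * (Real.pi : ℂ) * Complex.I) := by
    push_cast
    field_simp at hn
    linear_combination (-(2 * (Real.pi : ℂ) * Complex.I)) * hn
  have h4 : ((3 * n : ℤ) : ℂ) = 1 := mul_right_cancel₀ h2 h3
  have h5 : (3 * n : ℤ) = 1 := by exact_mod_cast h4
  omega

theorem folded_expectation_zero (d K : ℕ) (hd : 0 < d) (hK : 0 < K)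
    (g : ((Fin K × Fin d) → ZMod 3) → ℂ) (hg : FoldedC g) :
    natTestExpC d K (fun _x y z _w => g y * (starRingEnd ℂ) (g z)) = 0 := by
  classical
  have hgshift : ∀ y : (Fin K × Fin d) → ZMod 3, g (fun j => y j + 1) = ω * g y := by
    intro y
    have h := hg.2 y 1
    have hv : (1 : ZMod 3).val = 1 := rfl
    rw [hv, pow_one] at h
    exact h
  -- the inner sum over w
  have hW : ∀ (x : Fin K → ZMod 3) (y z : (Fin K × Fin d) → ZMod 3),
      (∑ w : (Fin K × Fin d) → ZMod 3,
        (if ∀ j : Fin K × Fin d, TwoPair ![x j.1, y j, z j, w j] then (1:ℂ) else 0))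
      = if ∀ j : Fin K × Fin d, Pval (x j.1) (y j) (z j) then (1:ℂ) else 0 := by
    intro x y z
    calc (∑ w : (Fin K × Fin d) → ZMod 3,
            (if ∀ j : Fin K × Fin d, TwoPair ![x j.1, y j, z j, w j] then (1:ℂ) else 0))
        = ∑ w : (Fin K × Fin d) → ZMod 3,
            ∏ j : Fin K × Fin d, (if TwoPair ![x j.1, y j, z j, w j] then (1:ℂ) else 0) := by
          refine Finset.sum_congr rfl fun w _ => ?_
          rw [Finset.prod_boole]
          exact ite_congr_inst (by simp) _ _
      _ = ∏ j : Fin K × Fin d, ∑ t : ZMod 3, (if TwoPair ![x j.1, y j, z j, t] then (1:ℂ) else 0) := by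
          rw [Finset.prod_univ_sum]
          rw [Fintype.piFinset_univ]
      _ = ∏ j : Fin K × Fin d, (if Pval (x j.1) (y j) (z j) then (1:ℂ) else 0) := by
          refine Finset.prod_congr rfl fun j _ => ?_
          rw [Finset.sum_boole, card_w]
          split <;> simp
      _ = if ∀ j : Fin K × Fin d, Pval (x j.1) (y j) (z j) then (1:ℂ) else 0 := by
          rw [Finset.prod_boole]
          exact ite_congr_inst (by simp) _ _
  -- reduce to the w-summed form
  have hnum : natTestExpC d K (fun _x y z _w => g y * (starRingEnd ℂ) (g z))
      = (∑ x : Fin K → ZMod 3, ∑ y : (Fin K × Fin d) → ZMod 3,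
          ∑ z : (Fin K × Fin d) → ZMod 3,
            (if ∀ j : Fin K × Fin d, Pval (x j.1) (y j) (z j) then (1:ℂ) else 0)
              * (g y * (starRingEnd ℂ) (g z))) / (3 ^ K * 6 ^ (d * K)) := by
    rw [natTestExpC]
    refine congrArg (fun s => s / ((3:ℂ) ^ K * 6 ^ (d * K))) ?_
    refine Finset.sum_congr rfl fun x _ => ?_
    refine Finset.sum_congr rfl fun y _ => ?_
    refine Finset.sum_congr rfl fun z _ => ?_
    rw [← Finset.sum_mul]
    refine congrArg (fun s => s * (g y * (starRingEnd ℂ) (g z))) ?_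
    refine Eq.trans ?_ (hW x y z)
    refine Finset.sum_congr rfl fun w _ => ?_
    exact ite_congr_inst Iff.rfl _ _
  -- reindexing lemmas
  have e1 : ∀ (G : (Fin K → ZMod 3) → ℂ),
      (∑ x : Fin K → ZMod 3, G (fun i => x i - 1)) = ∑ x : Fin K → ZMod 3, G x := by
    intro G
    exact Fintype.sum_equiv (Equiv.piCongrRight fun _ => Equiv.subRight (1 : ZMod 3))
      (fun x => G (fun i => x i - 1)) G (fun x => rfl)
  have e2 : ∀ (H : ((Fin K × Fin d) → ZMod 3) → ℂ),
      (∑ y : (Fin K × Fin d) → ZMod 3, H (fun j => y j + 1))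
      = ∑ y : (Fin K × Fin d) → ZMod 3, H y := by
    intro H
    exact Fintype.sum_equiv (Equiv.piCongrRight fun _ => Equiv.addRight (1 : ZMod 3))
      (fun y => H (fun j => y j + 1)) H (fun y => rfl)
  -- the key pointwise shift identity
  have step : ∀ (x : Fin K → ZMod 3) (y z : (Fin K × Fin d) → ZMod 3),
      (if ∀ j : Fin K × Fin d, Pval (x j.1 - 1) (y j + 1) (z j) then (1:ℂ) else 0)
          * (g (fun j => y j + 1) * (starRingEnd ℂ) (g z))
      = ω * ((if ∀ j : Fin K × Fin d, Pval (x j.1) (y j) (z j) then (1:ℂ) else 0)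
          * (g y * (starRingEnd ℂ) (g z))) := by
    intro x y z
    rw [hgshift y,
      ite_congr_inst (forall_congr' fun j => Pval_shift (x j.1) (y j) (z j)) (1:ℂ) 0]
    ring
  -- the main shift argument
  have hT0 : (∑ x : Fin K → ZMod 3, ∑ y : (Fin K × Fin d) → ZMod 3,
      ∑ z : (Fin K × Fin d) → ZMod 3,
        (if ∀ j : Fin K × Fin d, Pval (x j.1) (y j) (z j) then (1:ℂ) else 0)
          * (g y * (starRingEnd ℂ) (g z))) = 0 := by
    have hshift : (∑ x : Fin K → ZMod 3, ∑ y : (Fin K × Fin d) → ZMod 3,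
        ∑ z : (Fin K × Fin d) → ZMod 3,
          (if ∀ j : Fin K × Fin d, Pval (x j.1) (y j) (z j) then (1:ℂ) else 0)
            * (g y * (starRingEnd ℂ) (g z)))
        = ω * (∑ x : Fin K → ZMod 3, ∑ y : (Fin K × Fin d) → ZMod 3,
        ∑ z : (Fin K × Fin d) → ZMod 3,
          (if ∀ j : Fin K × Fin d, Pval (x j.1) (y j) (z j) then (1:ℂ) else 0)
            * (g y * (starRingEnd ℂ) (g z))) := by
      calc (∑ x : Fin K → ZMod 3, ∑ y : (Fin K × Fin d) → ZMod 3,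
          ∑ z : (Fin K × Fin d) → ZMod 3,
            (if ∀ j : Fin K × Fin d, Pval (x j.1) (y j) (z j) then (1:ℂ) else 0)
              * (g y * (starRingEnd ℂ) (g z)))
          = ∑ x : Fin K → ZMod 3, ∑ y : (Fin K × Fin d) → ZMod 3,
            ∑ z : (Fin K × Fin d) → ZMod 3,
              (if ∀ j : Fin K × Fin d, Pval (x j.1) (y j + 1) (z j) then (1:ℂ) else 0)
                * (g (fun j => y j + 1) * (starRingEnd ℂ) (g z)) := by
            refine Finset.sum_congr rfl fun x _ => ?_
            exact (e2 (fun y => ∑ z : (Fin K × Fin d) → ZMod 3,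
              (if ∀ j : Fin K × Fin d, Pval (x j.1) (y j) (z j) then (1:ℂ) else 0)
                * (g y * (starRingEnd ℂ) (g z)))).symm
        _ = ∑ x : Fin K → ZMod 3, ∑ y : (Fin K × Fin d) → ZMod 3,
            ∑ z : (Fin K × Fin d) → ZMod 3,
              (if ∀ j : Fin K × Fin d, Pval (x j.1 - 1) (y j + 1) (z j) then (1:ℂ) else 0)
                * (g (fun j => y j + 1) * (starRingEnd ℂ) (g z)) := by
            exact (e1 (fun x => ∑ y : (Fin K × Fin d) → ZMod 3,
              ∑ z : (Fin K × Fin d) → ZMod 3,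
                (if ∀ j : Fin K × Fin d, Pval (x j.1) (y j + 1) (z j) then (1:ℂ) else 0)
                  * (g (fun j => y j + 1) * (starRingEnd ℂ) (g z)))).symm
        _ = ∑ x : Fin K → ZMod 3, ∑ y : (Fin K × Fin d) → ZMod 3,
            ∑ z : (Fin K × Fin d) → ZMod 3,
              ω * ((if ∀ j : Fin K × Fin d, Pval (x j.1) (y j) (z j) then (1:ℂ) else 0)
                * (g y * (starRingEnd ℂ) (g z))) := by
            refine Finset.sum_congr rfl fun x _ => ?_
            refine Finset.sum_congr rfl fun y _ => ?_
            refine Finset.sum_congr rfl fun z _ => ?_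
            exact step x y z
        _ = ω * (∑ x : Fin K → ZMod 3, ∑ y : (Fin K × Fin d) → ZMod 3,
            ∑ z : (Fin K × Fin d) → ZMod 3,
              (if ∀ j : Fin K × Fin d, Pval (x j.1) (y j) (z j) then (1:ℂ) else 0)
                * (g y * (starRingEnd ℂ) (g z))) := by
            simp only [← Finset.mul_sum]
    have h1 : (1 - ω) * (∑ x : Fin K → ZMod 3, ∑ y : (Fin K × Fin d) → ZMod 3,
        ∑ z : (Fin K × Fin d) → ZMod 3,
          (if ∀ j : Fin K × Fin d, Pval (x j.1) (y j) (z j) then (1:ℂ) else 0)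
            * (g y * (starRingEnd ℂ) (g z))) = 0 := by
      rw [sub_mul, one_mul]
      nth_rewrite 1 [hshift]
      ring
    rcases mul_eq_zero.mp h1 with h | h
    · exact absurd (by linear_combination -h : ω = 1) omega_ne_one
    · exact h
  rw [hnum, hT0, zero_div]
end

section
/- Let a ∈ ZMod 3 and f₁, f₂ ∈ ZMod 3. If f₁ − f₂ ≠ a, then there exists a pair (g₁, g₂) ∈ (ZMod 3)² with g₁ − g₂ ≠ a, g₁ = f₁, and g₂ = f₂. If f₁ − f₂ = a, then every pair (g₁, g₂) with g₁ − g₂ ≠ a satisfies ¬(g₁ = f₁ ∧ g₂ = f₂), and there exists a pair (g₁, g₂) with g₁ − g₂ ≠ a for which exactly one of the equalities g₁ = f₁, g₂ = f₂ holds. -/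
theorem constraint_variable_gadget (a f₁ f₂ : ZMod 3) :
    (f₁ - f₂ ≠ a → ∃ g₁ g₂ : ZMod 3, g₁ - g₂ ≠ a ∧ g₁ = f₁ ∧ g₂ = f₂) ∧
    (f₁ - f₂ = a →
      (∀ g₁ g₂ : ZMod 3, g₁ - g₂ ≠ a → ¬(g₁ = f₁ ∧ g₂ = f₂)) ∧
      ∃ g₁ g₂ : ZMod 3, g₁ - g₂ ≠ a ∧ Xor' (g₁ = f₁) (g₂ = f₂)) := by
  revert a f₁ f₂; unfold Xor'; decide
end
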